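/- Let p1^{k+1}, p2^{k+1} be probability distributions on A^{k+1} with marginals p1^k, p2^k on A^k (summing over the last letter), and define r^k(w) = min{p1^k(w), p2^k(w)} and r^{k+1}(u) = min{p1^{k+1}(u), p2^{k+1}(u)}. Then the optimal transport costs for the Cantor ground distance satisfy the recursion K^{k+1} = K^k + 2^{-k} Σ_{w∈A^k} ( r^k(w) − Σ_{a∈A} r^{k+1}(wa) ), where K^k (resp. K^{k+1}) is the minimal Kantorovich cost between p1^k and p2^k (resp. p1^{k+1} and p2^{k+1}) with Cantor ground distance. -/
import Mathlib


/-- The length of the longest common prefix of two words `w1 w2 : Fin k → A`. -/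
def lcpLen {A : Type*} [DecidableEq A] {k : ℕ} (w1 w2 : Fin k → A) : ℕ :=
  (Finset.filter (fun i : Fin k => ∀ j, j ≤ i → w1 j = w2 j) Finset.univ).card

/-- The Cantor distance on words of length `k`. -/
noncomputable def cantor {A : Type*} [DecidableEq A] {k : ℕ} (w1 w2 : Fin k → A) : ℝ :=
  if w1 = w2 then 0 else (2 : ℝ) ^ (-(lcpLen w1 w2 : ℤ))

/-- `p` is a probability distribution on the finite set `X`. -/
def IsProbDist {X : Type*} [Fintype X] (p : X → ℝ) : Prop :=
  (∀ x, 0 ≤ p x) ∧ ∑ x, p x = 1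

/-- `π` is a coupling of `p1` and `p2`. -/
def IsCoupling {X : Type*} [Fintype X] (p1 p2 : X → ℝ) (π : X → X → ℝ) : Prop :=
  (∀ x y, 0 ≤ π x y) ∧ (∀ x, ∑ y, π x y = p1 x) ∧ (∀ y, ∑ x, π x y = p2 y)

/-- The Kantorovich (optimal transport) cost between `p1` and `p2` with ground cost `D`. -/
noncomputable def kant {X : Type*} [Fintype X] (D : X → X → ℝ) (p1 p2 : X → ℝ) : ℝ :=
  sInf {c : ℝ | ∃ π : X → X → ℝ, IsCoupling p1 p2 π ∧ c = ∑ x, ∑ y, D x y * π x y}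

/-- `π` is an optimal coupling of `p1` and `p2` for the ground cost `D`. -/
def IsOptimalCoupling {X : Type*} [Fintype X] (D : X → X → ℝ) (p1 p2 : X → ℝ)
    (π : X → X → ℝ) : Prop :=
  IsCoupling p1 p2 π ∧ ∀ π' : X → X → ℝ, IsCoupling p1 p2 π' →
    ∑ x, ∑ y, D x y * π x y ≤ ∑ x, ∑ y, D x y * π' x y

namespace CKR
set_option linter.unusedSectionVars false
variable {A : Type*} [Fintype A] [DecidableEq A] {k : ℕ}

/-- the lcp filter -/
def lf (u v : Fin k → A) : Finset (Fin k) :=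
  Finset.filter (fun i : Fin k => ∀ j, j ≤ i → u j = v j) Finset.univ

lemma lcpLen_eq (u v : Fin k → A) : lcpLen u v = (lf u v).card := rfl

lemma lf_downclosed {u v : Fin k → A} {i i' : Fin k} (h : i' ≤ i) (hi : i ∈ lf u v) :
    i' ∈ lf u v := by
  simp only [lf, Finset.mem_filter, Finset.mem_univ, true_and] at *
  exact fun j hj => hi j (le_trans hj h)

lemma lf_comparable (u v x y : Fin k → A) : lf u v ⊆ lf x y ∨ lf x y ⊆ lf u v := by
  by_cases h : lf u v ⊆ lf x y
  · exact Or.inl h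
  · right
    obtain ⟨s, hs, hs'⟩ := Finset.not_subset.mp h
    intro t ht
    rcases le_total t s with h1 | h1
    · exact lf_downclosed h1 hs
    · exact absurd (lf_downclosed h1 ht) hs'

lemma lf_inter_subset (x y z : Fin k → A) : lf x y ∩ lf y z ⊆ lf x z := by
  intro i hi
  simp only [lf, Finset.mem_inter, Finset.mem_filter, Finset.mem_univ, true_and] at *
  exact fun j hj => (hi.1 j hj).trans (hi.2 j hj)

lemma cantor_self (u : Fin k → A) : cantor u u = 0 := if_pos rfl

lemma cantor_nonneg (u v : Fin k → A) : 0 ≤ cantor u v := by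
  unfold cantor; split
  · exact le_refl _
  · positivity

lemma cantor_eq_of_ne {u v : Fin k → A} (h : u ≠ v) :
    cantor u v = (2 : ℝ) ^ (-(lcpLen u v : ℤ)) := if_neg h

lemma le_cantor {u v : Fin k → A} (h : u ≠ v) : (2 : ℝ) ^ (-(k : ℤ)) ≤ cantor u v := by
  rw [cantor_eq_of_ne h]
  apply zpow_le_zpow_right₀ one_le_two
  simp only [neg_le_neg_iff, Nat.cast_le]
  exact le_trans (Finset.card_filter_le _ _) (by simp)

lemma cantor_ultra (x y z : Fin k → A) : cantor x z ≤ max (cantor x y) (cantor y z) := by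
  by_cases hxz : x = z
  · subst hxz; rw [cantor_self]
    exact le_max_of_le_left (cantor_nonneg _ _)
  by_cases hxy : x = y
  · subst hxy; exact le_max_right _ _
  by_cases hyz : y = z
  · subst hyz; exact le_max_left _ _
  rcases lf_comparable x y y z with h | h
  · apply le_max_of_le_left
    rw [cantor_eq_of_ne hxz, cantor_eq_of_ne hxy]
    apply zpow_le_zpow_right₀ one_le_two
    simp only [neg_le_neg_iff, Nat.cast_le, lcpLen_eq]
    apply Finset.card_le_card
    intro i hi
    exact lf_inter_subset x y z (Finset.mem_inter.mpr ⟨hi, h hi⟩)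
  · apply le_max_of_le_right
    rw [cantor_eq_of_ne hxz, cantor_eq_of_ne hyz]
    apply zpow_le_zpow_right₀ one_le_two
    simp only [neg_le_neg_iff, Nat.cast_le, lcpLen_eq]
    apply Finset.card_le_card
    intro i hi
    exact lf_inter_subset x y z (Finset.mem_inter.mpr ⟨h hi, hi⟩)

end CKR

namespace CKR
set_option linter.unusedSectionVars false
variable {A : Type*} [Fintype A] [DecidableEq A] {k : ℕ}

lemma snoc_ne_snoc_of_ne {w w' : Fin k → A} (h : w ≠ w') (a b : A) :
    (Fin.snoc w a : Fin (k+1) → A) ≠ Fin.snoc w' b := by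
  intro hc
  apply h
  have := congrArg Fin.init hc
  rwa [Fin.init_snoc, Fin.init_snoc] at this

lemma lcpLen_snoc_ne {w w' : Fin k → A} (h : w ≠ w') (a b : A) :
    lcpLen (Fin.snoc w a : Fin (k+1) → A) (Fin.snoc w' b) = lcpLen w w' := by
  obtain ⟨j0, hj0⟩ : ∃ j0, w j0 ≠ w' j0 := by
    by_contra hc; push_neg at hc; exact h (funext hc)
  rw [lcpLen_eq, lcpLen_eq]
  have himg : lf (Fin.snoc w a : Fin (k+1) → A) (Fin.snoc w' b)
      = (lf w w').image Fin.castSucc := by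
    ext i
    simp only [lf, Finset.mem_filter, Finset.mem_univ, true_and, Finset.mem_image]
    constructor
    · intro hi
      have hlast : i ≠ Fin.last k := by
        rintro rfl
        have := hi (Fin.castSucc j0) (Fin.le_last _)
        rw [Fin.snoc_castSucc, Fin.snoc_castSucc] at this
        exact hj0 this
      refine ⟨i.castPred hlast, ?_, Fin.castSucc_castPred i hlast⟩
      intro j hj
      have h2 := hi (Fin.castSucc j) (by
        rw [← Fin.castSucc_castPred i hlast]
        exact Fin.castSucc_le_castSucc_iff.mpr hj)
      rwa [Fin.snoc_castSucc, Fin.snoc_castSucc] at h2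
    · rintro ⟨i', hi', rfl⟩
      intro j hj
      have hjlast : j ≠ Fin.last k := by
        rintro rfl
        exact (Fin.castSucc_lt_last i').not_ge hj
      rw [← Fin.castSucc_castPred j hjlast, Fin.snoc_castSucc, Fin.snoc_castSucc]
      apply hi'
      rw [← Fin.castSucc_le_castSucc_iff, Fin.castSucc_castPred j hjlast]
      exact hj
  rw [himg, Finset.card_image_of_injective _ (Fin.castSucc_injective k)]

lemma lcpLen_snoc_same (w : Fin k → A) {a b : A} (hab : a ≠ b) :
    lcpLen (Fin.snoc w a : Fin (k+1) → A) (Fin.snoc w b) = k := by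
  rw [lcpLen_eq]
  have : lf (Fin.snoc w a : Fin (k+1) → A) (Fin.snoc w b) = Finset.univ \ {Fin.last k} := by
    ext i
    simp only [lf, Finset.mem_filter, Finset.mem_univ, true_and, Finset.mem_sdiff,
      Finset.mem_singleton]
    constructor
    · intro hi
      intro hc; subst hc
      have := hi (Fin.last k) (le_refl _)
      rw [Fin.snoc_last, Fin.snoc_last] at this
      exact hab this
    · intro hi j hj
      have hjlast : j ≠ Fin.last k := by
        intro hc; subst hc
        exact hi (le_antisymm (Fin.le_last _) hj)
      rw [← Fin.castSucc_castPred j hjlast, Fin.snoc_castSucc, Fin.snoc_castSucc]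
  rw [this, Finset.card_sdiff_of_subset (by simp)]
  simp

lemma cantor_snoc (w w' : Fin k → A) (a b : A) :
    cantor (Fin.snoc w a : Fin (k+1) → A) (Fin.snoc w' b)
      = cantor w w' + (if w = w' ∧ a ≠ b then (2 : ℝ) ^ (-(k : ℤ)) else 0) := by
  by_cases hww : w = w'
  · subst hww
    by_cases hab : a = b
    · subst hab; simp [cantor_self]
    · rw [cantor_self, cantor_eq_of_ne (by
        intro hc
        exact hab (by simpa [Fin.snoc_last] using congrFun hc (Fin.last k))),
        lcpLen_snoc_same w hab]
      simp [hab]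
  · rw [cantor_eq_of_ne (snoc_ne_snoc_of_ne hww a b), cantor_eq_of_ne hww,
      lcpLen_snoc_ne hww a b]
    simp [hww]

end CKR

namespace CKR
set_option linter.unusedSectionVars false

variable {X : Type*} [Fintype X]

lemma kant_le {D : X → X → ℝ} (hD : ∀ x y, 0 ≤ D x y) {p1 p2 : X → ℝ} {π : X → X → ℝ}
    (h : IsCoupling p1 p2 π) :
    kant D p1 p2 ≤ ∑ x, ∑ y, D x y * π x y := by
  apply csInf_le
  · refine ⟨0, ?_⟩
    rintro c ⟨π', hπ', rfl⟩
    exact Finset.sum_nonneg fun x _ => Finset.sum_nonneg fun y _ =>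
      mul_nonneg (hD x y) (hπ'.1 x y)
  · exact ⟨π, h, rfl⟩

lemma le_kant {D : X → X → ℝ} {p1 p2 : X → ℝ} {b : ℝ}
    (hne : ∃ π : X → X → ℝ, IsCoupling p1 p2 π)
    (hb : ∀ π : X → X → ℝ, IsCoupling p1 p2 π → b ≤ ∑ x, ∑ y, D x y * π x y) :
    b ≤ kant D p1 p2 := by
  obtain ⟨π0, h0⟩ := hne
  apply le_csInf
  · exact ⟨∑ x, ∑ y, D x y * π0 x y, π0, h0, rfl⟩
  · rintro c ⟨π, hπ, rfl⟩
    exact hb π hπ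

lemma prod_isCoupling {p1 p2 : X → ℝ} (hp1 : IsProbDist p1) (hp2 : IsProbDist p2) :
    IsCoupling p1 p2 (fun x y => p1 x * p2 y) := by
  refine ⟨fun x y => mul_nonneg (hp1.1 x) (hp2.1 y), fun x => ?_, fun y => ?_⟩
  · rw [← Finset.mul_sum, hp2.2, mul_one]
  · rw [← Finset.sum_mul, hp1.2, one_mul]

end CKR

namespace CKR
set_option linter.unusedSectionVars false
set_option maxHeartbeats 1000000

variable {A : Type*} [Fintype A] [DecidableEq A] {k : ℕ}

/-- transport cost -/
def tcost {X : Type*} [Fintype X] (D σ : X → X → ℝ) : ℝ := ∑ x, ∑ y, D x y * σ x y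

/-- indicator -/
def χ {X : Type*} [DecidableEq X] (a b : X) : ℝ := if a = b then 1 else 0

lemma χ_nonneg {X : Type*} [DecidableEq X] (a b : X) : 0 ≤ χ a b := by
  unfold χ; split <;> norm_num

lemma sum_mul_χ {X : Type*} [Fintype X] [DecidableEq X] (f : X → ℝ) (c : X) :
    ∑ y, f y * χ y c = f c := by
  simp [χ, mul_ite]

lemma sum_χ {X : Type*} [Fintype X] [DecidableEq X] (c : X) : ∑ y : X, χ y c = 1 := by
  simp [χ]

open Classical in
noncomputable def rowcol {X : Type*} [Fintype X] (σ : X → X → ℝ) (w : X) : Finset (X × X) :=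
  Finset.univ.filter (fun p => p.1 ≠ p.2 ∧ (p.1 = w ∨ p.2 = w) ∧ 0 < σ p.1 p.2)

lemma exists_pos_row {q1 q2 : (Fin k → A) → ℝ} {σ : (Fin k → A) → (Fin k → A) → ℝ}
    (hσ : IsCoupling q1 q2 σ) {w : Fin k → A} (h : σ w w < q1 w) :
    ∃ w', w' ≠ w ∧ 0 < σ w w' := by
  have hrow : ∑ y, σ w y = q1 w := hσ.2.1 w
  have hpos : 0 < ∑ y ∈ Finset.univ.erase w, σ w y := by
    have he : ∑ y ∈ Finset.univ.erase w, σ w y = q1 w - σ w w := by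
      rw [← hrow, ← Finset.add_sum_erase _ _ (Finset.mem_univ w)]; ring
    rw [he]; linarith
  by_contra hc
  push_neg at hc
  have : ∑ y ∈ Finset.univ.erase w, σ w y ≤ 0 :=
    Finset.sum_nonpos fun y hy => hc y (Finset.ne_of_mem_erase hy)
  linarith

lemma exists_pos_col {q1 q2 : (Fin k → A) → ℝ} {σ : (Fin k → A) → (Fin k → A) → ℝ}
    (hσ : IsCoupling q1 q2 σ) {w : Fin k → A} (h : σ w w < q2 w) :
    ∃ w'', w'' ≠ w ∧ 0 < σ w'' w := by
  have hcol : ∑ x, σ x w = q2 w := hσ.2.2 w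
  have hpos : 0 < ∑ x ∈ Finset.univ.erase w, σ x w := by
    have he : ∑ x ∈ Finset.univ.erase w, σ x w = q2 w - σ w w := by
      rw [← hcol, ← Finset.add_sum_erase _ _ (Finset.mem_univ w)]; ring
    rw [he]; linarith
  by_contra hc
  push_neg at hc
  have : ∑ x ∈ Finset.univ.erase w, σ x w ≤ 0 :=
    Finset.sum_nonpos fun x hx => hc x (Finset.ne_of_mem_erase hx)
  linarith

end CKR

namespace CKR
set_option linter.unusedSectionVars false
set_option maxHeartbeats 1000000

variable {A : Type*} [Fintype A] [DecidableEq A] {k : ℕ}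

lemma sum_χ_mul {X : Type*} [Fintype X] [DecidableEq X] (f : X → ℝ) (c : X) :
    ∑ y, χ y c * f y = f c := by
  simp [χ, ite_mul]

lemma swap_all {q1 q2 : (Fin k → A) → ℝ} {σ : (Fin k → A) → (Fin k → A) → ℝ}
    (hσ : IsCoupling q1 q2 σ)
    {w w' w'' : Fin k → A} (hw' : w' ≠ w) (hw'' : w'' ≠ w)
    {ε : ℝ} (hε0 : 0 ≤ ε) (hε1 : ε ≤ σ w w') (hε2 : ε ≤ σ w'' w) :
    ∃ τ : (Fin k → A) → (Fin k → A) → ℝ, IsCoupling q1 q2 τ ∧ (∀ x, σ x x ≤ τ x x) ∧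
      τ w w = σ w w + ε ∧
      tcost cantor τ + (2:ℝ) ^ (-(k:ℤ)) * (∑ x, (τ x x - σ x x)) ≤ tcost cantor σ ∧
      (∀ x y, x ≠ y → (x = w ∨ y = w) → τ x y ≤ σ x y) ∧
      τ w w' = σ w w' - ε ∧ τ w'' w = σ w'' w - ε := by
  have hww' : w ≠ w' := hw'.symm
  have hww'' : w ≠ w'' := hw''.symm
  set τ : (Fin k → A) → (Fin k → A) → ℝ :=
    fun x y => σ x y + ε * ((χ x w - χ x w'') * (χ y w - χ y w')) with hτ
  have hτval : ∀ x y, τ x y = σ x y + ε * ((χ x w - χ x w'') * (χ y w - χ y w')) :=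
    fun x y => rfl
  -- values at special cells
  have hvww : τ w w = σ w w + ε := by
    rw [hτval]; simp [χ, hww', hww'']
  have hvww' : τ w w' = σ w w' - ε := by
    rw [hτval]; simp [χ, hw', hww'', hww']; ring
  have hvw''w : τ w'' w = σ w'' w - ε := by
    rw [hτval]; simp [χ, hw'', hww', hww'']; ring
  -- nonnegativity
  have hτnonneg : ∀ x y, 0 ≤ τ x y := by
    intro x y
    have hσxy := hσ.1 x y
    by_cases h1 : x = w ∧ y = w'
    · rw [hτval, h1.1, h1.2]
      have hfac : (χ w w - χ w w'') * (χ w' w - χ w' w') = -1 := by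
        simp [χ, hww'', hw']
      rw [hfac]; linarith
    by_cases h2 : x = w'' ∧ y = w
    · rw [hτval, h2.1, h2.2]
      have hfac : (χ w'' w - χ w'' w'') * (χ w w - χ w w') = -1 := by
        simp [χ, hw'', hww']
      rw [hfac]; linarith
    · rw [hτval]
      have hfac : 0 ≤ (χ x w - χ x w'') * (χ y w - χ y w') := by
        push_neg at h1 h2
        unfold χ
        split_ifs <;> simp_all <;> norm_num
      nlinarith [mul_nonneg hε0 hfac]
  -- marginals
  have hτrow : ∀ x, ∑ y, τ x y = q1 x := by
    intro x
    simp only [hτval]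
    rw [Finset.sum_add_distrib, hσ.2.1 x, ← Finset.mul_sum, ← Finset.mul_sum]
    have h0 : ∑ y, (χ y w - χ y w') = 0 := by
      rw [Finset.sum_sub_distrib, sum_χ, sum_χ]; ring
    rw [h0, mul_zero, mul_zero, add_zero]
  have hτcol : ∀ y, ∑ x, τ x y = q2 y := by
    intro y
    simp only [hτval]
    rw [Finset.sum_add_distrib, hσ.2.2 y, ← Finset.mul_sum, ← Finset.sum_mul]
    have h0 : ∑ x, (χ x w - χ x w'') = 0 := by
      rw [Finset.sum_sub_distrib, sum_χ, sum_χ]; ring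
    rw [h0, zero_mul, mul_zero, add_zero]
  -- diagonal monotone
  have hτdiag : ∀ x, σ x x ≤ τ x x := by
    intro x
    rw [hτval]
    have hfac : 0 ≤ (χ x w - χ x w'') * (χ x w - χ x w') := by
      unfold χ
      split_ifs <;> simp_all <;> norm_num
    nlinarith [mul_nonneg hε0 hfac]
  -- diagonal sum identity
  have hdiagsum : ∑ x, (τ x x - σ x x) = ε * (1 + χ w'' w') := by
    have hterm : ∀ x, τ x x - σ x x = ε * ((χ x w - χ x w'') * (χ x w - χ x w')) := by
      intro x; rw [hτval]; ring
    have hS : ∑ x, (χ x w - χ x w'') * (χ x w - χ x w') = 1 + χ w'' w' := by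
      have expand : ∀ x : Fin k → A, (χ x w - χ x w'') * (χ x w - χ x w')
          = χ x w * χ x w - χ x w * χ x w' - χ x w'' * χ x w + χ x w'' * χ x w' := by
        intro x; ring
      have e1 : ∑ x, χ x w * χ x w = χ w w := sum_χ_mul (fun x => χ x w) w
      have e2 : ∑ x, χ x w * χ x w' = χ w w' := sum_χ_mul (fun x => χ x w') w
      have e3 : ∑ x, χ x w'' * χ x w = χ w'' w := sum_χ_mul (fun x => χ x w) w''
      have e4 : ∑ x, χ x w'' * χ x w' = χ w'' w' := sum_χ_mul (fun x => χ x w') w''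
      rw [Finset.sum_congr rfl fun x _ => expand x]
      rw [Finset.sum_add_distrib, Finset.sum_sub_distrib, Finset.sum_sub_distrib, e1, e2, e3, e4]
      have : χ w w = 1 := by simp [χ]
      have h2 : χ w w' = 0 := by simp [χ, hww']
      have h3 : χ w'' w = 0 := by simp [χ, hw'']
      rw [this, h2, h3]; ring
    rw [Finset.sum_congr rfl fun x _ => hterm x, ← Finset.mul_sum, hS]
  -- cost identity
  have hcost : tcost cantor τ = tcost cantor σ
      + ε * (cantor w'' w' - cantor w w' - cantor w'' w) := by
    unfold tcost
    have inner : ∀ x, ∑ y, cantor x y * τ x y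
        = (∑ y, cantor x y * σ x y) + ε * (χ x w - χ x w'') * (cantor x w - cantor x w') := by
      intro x
      have : ∀ y, cantor x y * τ x y = cantor x y * σ x y
          + ε * (χ x w - χ x w'') * (cantor x y * χ y w - cantor x y * χ y w') := by
        intro y; rw [hτval]; ring
      rw [Finset.sum_congr rfl fun y _ => this y, Finset.sum_add_distrib, ← Finset.mul_sum,
        Finset.sum_sub_distrib, sum_mul_χ, sum_mul_χ]
    rw [Finset.sum_congr rfl fun x _ => inner x, Finset.sum_add_distrib]
    congr 1
    have : ∀ x, ε * (χ x w - χ x w'') * (cantor x w - cantor x w')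
        = ε * (χ x w * (cantor x w - cantor x w') - χ x w'' * (cantor x w - cantor x w')) := by
      intro x; ring
    rw [Finset.sum_congr rfl fun x _ => this x, ← Finset.mul_sum, Finset.sum_sub_distrib,
      sum_χ_mul (fun x => cantor x w - cantor x w') w,
      sum_χ_mul (fun x => cantor x w - cantor x w') w'']
    rw [cantor_self]
    ring
  -- the key cost inequality
  have hkey : tcost cantor τ + (2:ℝ) ^ (-(k:ℤ)) * (∑ x, (τ x x - σ x x)) ≤ tcost cantor σ := by
    rw [hcost, hdiagsum]
    have hB : cantor w'' w' - cantor w w' - cantor w'' w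
        + (2:ℝ) ^ (-(k:ℤ)) * (1 + χ w'' w') ≤ 0 := by
      rcases eq_or_ne w'' w' with rfl | hne
      · have h1 := le_cantor hww'
        have h2 := le_cantor hw''
        rw [cantor_self]
        have hχ : χ w'' w'' = 1 := by simp [χ]
        rw [hχ]
        linarith
      · have hub := cantor_ultra w'' w w'
        have h1 := le_cantor hww'
        have h2 := le_cantor hw''
        simp only [χ, if_neg hne]
        rcases max_cases (cantor w'' w) (cantor w w') with ⟨hmax, _⟩ | ⟨hmax, _⟩ <;>
          rw [hmax] at hub <;> linarith
    nlinarith [hε0, hB]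
  -- decrease on row/column of w
  have hdec : ∀ x y, x ≠ y → (x = w ∨ y = w) → τ x y ≤ σ x y := by
    intro x y hxy hor
    rw [hτval]
    rcases hor with hxw | hyw
    · have hyw : y ≠ w := fun h => hxy (hxw.trans h.symm)
      have hfac : (χ x w - χ x w'') * (χ y w - χ y w') = -(χ y w') := by
        simp [χ, hxw, hww'', hyw]
      rw [hfac]
      nlinarith [χ_nonneg y w', hε0]
    · have hxw : x ≠ w := fun h => hxy (h.trans hyw.symm)
      have hfac : (χ x w - χ x w'') * (χ y w - χ y w') = -(χ x w'') := by
        simp [χ, hyw, hxw, hww']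
      rw [hfac]
      nlinarith [χ_nonneg x w'', hε0]
  exact ⟨τ, ⟨hτnonneg, hτrow, hτcol⟩, hτdiag, hvww, hkey, hdec, hvww', hvw''w⟩

end CKR

namespace CKR
set_option linter.unusedSectionVars false
set_option maxHeartbeats 1000000

variable {A : Type*} [Fintype A] [DecidableEq A] {k : ℕ}

lemma mem_rowcol {X : Type*} [Fintype X] {σ : X → X → ℝ} {w : X} {p : X × X} :
    p ∈ rowcol σ w ↔ p.1 ≠ p.2 ∧ (p.1 = w ∨ p.2 = w) ∧ 0 < σ p.1 p.2 := by
  classical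
  simp [rowcol]

lemma inner_swap {q1 q2 : (Fin k → A) → ℝ} :
    ∀ (n : ℕ) (σ : (Fin k → A) → (Fin k → A) → ℝ) (w : Fin k → A),
    IsCoupling q1 q2 σ → (rowcol σ w).card ≤ n →
    ∃ σ', IsCoupling q1 q2 σ' ∧ (∀ x, σ x x ≤ σ' x x) ∧ min (q1 w) (q2 w) ≤ σ' w w ∧
      tcost cantor σ' + (2:ℝ) ^ (-(k:ℤ)) * (∑ x, (σ' x x - σ x x)) ≤ tcost cantor σ := by
  intro n
  induction n with
  | zero =>
    intro σ w hσ hcard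
    refine ⟨σ, hσ, fun x => le_refl _, ?_, by simp⟩
    by_contra hlt
    push_neg at hlt
    obtain ⟨w', hw'ne, hw'⟩ := exists_pos_row hσ (lt_of_lt_of_le hlt (min_le_left _ _))
    have hmem : ((w, w') : _ × _) ∈ rowcol σ w :=
      mem_rowcol.mpr ⟨hw'ne.symm, Or.inl rfl, hw'⟩
    have := Finset.card_pos.mpr ⟨_, hmem⟩
    omega
  | succ n ih =>
    intro σ w hσ hcard
    by_cases hfull : min (q1 w) (q2 w) ≤ σ w w
    · exact ⟨σ, hσ, fun x => le_refl _, hfull, by simp⟩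
    push_neg at hfull
    obtain ⟨w', hw'ne, hw'⟩ := exists_pos_row hσ (lt_of_lt_of_le hfull (min_le_left _ _))
    obtain ⟨w'', hw''ne, hw''⟩ := exists_pos_col hσ (lt_of_lt_of_le hfull (min_le_right _ _))
    by_cases hcase : min (q1 w) (q2 w) - σ w w ≤ min (σ w w') (σ w'' w)
    · -- one swap completes the diagonal at w
      set ε := min (q1 w) (q2 w) - σ w w with hε
      have hε0 : 0 ≤ ε := by rw [hε]; linarith
      have hε1 : ε ≤ σ w w' := le_trans hcase (min_le_left _ _)
      have hε2 : ε ≤ σ w'' w := le_trans hcase (min_le_right _ _)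
      obtain ⟨τ, hτc, hτd, hτww, hτcost, -, -, -⟩ :=
        swap_all hσ hw'ne hw''ne hε0 hε1 hε2
      exact ⟨τ, hτc, hτd, by rw [hτww]; rw [hε]; linarith, hτcost⟩
    · -- a swap that empties one cell of row/column w
      push_neg at hcase
      set ε := min (σ w w') (σ w'' w) with hε
      have hε0 : 0 ≤ ε := le_min (le_of_lt hw') (le_of_lt hw'')
      have hεpos : 0 < ε := lt_min hw' hw''
      obtain ⟨τ, hτc, hτd, hτww, hτcost, hτdec, hτv1, hτv2⟩ :=
        swap_all hσ hw'ne hw''ne hε0 (min_le_left _ _) (min_le_right _ _)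
      -- rowcol shrinks strictly
      have hsub : rowcol τ w ⊆ rowcol σ w := by
        intro p hp
        obtain ⟨hne, hor, hpos⟩ := mem_rowcol.mp hp
        refine mem_rowcol.mpr ⟨hne, hor, lt_of_lt_of_le hpos (hτdec p.1 p.2 hne hor)⟩
      have hzero : ∃ p, p ∈ rowcol σ w ∧ p ∉ rowcol τ w := by
        rcases min_cases (σ w w') (σ w'' w) with ⟨hmin, -⟩ | ⟨hmin, -⟩
        · refine ⟨(w, w'), mem_rowcol.mpr ⟨hw'ne.symm, Or.inl rfl, hw'⟩, ?_⟩
          intro hc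
          have := (mem_rowcol.mp hc).2.2
          rw [hτv1, hε, hmin] at this
          simp at this
        · refine ⟨(w'', w), mem_rowcol.mpr ⟨hw''ne, Or.inr rfl, hw''⟩, ?_⟩
          intro hc
          have := (mem_rowcol.mp hc).2.2
          rw [hτv2, hε, hmin] at this
          simp at this
      obtain ⟨p0, hp0in, hp0out⟩ := hzero
      have hss : rowcol τ w ⊂ rowcol σ w := ⟨hsub, fun hc => hp0out (hc hp0in)⟩
      have hcard' : (rowcol τ w).card ≤ n := by
        have := Finset.card_lt_card hss
        omega
      obtain ⟨σ', hσ'c, hσ'd, hσ'w, hσ'cost⟩ := ih τ w hτc hcard'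
      refine ⟨σ', hσ'c, fun x => le_trans (hτd x) (hσ'd x), hσ'w, ?_⟩
      have hsplit : ∑ x, (σ' x x - σ x x)
          = (∑ x, (σ' x x - τ x x)) + (∑ x, (τ x x - σ x x)) := by
        rw [← Finset.sum_add_distrib]
        apply Finset.sum_congr rfl
        intro x _
        ring
      rw [hsplit, mul_add]
      linarith

end CKR

namespace CKR
set_option linter.unusedSectionVars false
set_option maxHeartbeats 1000000

variable {A : Type*} [Fintype A] [DecidableEq A] {k : ℕ}

open Classical in
noncomputable def defic {X : Type*} [Fintype X] (q1 q2 : X → ℝ) (σ : X → X → ℝ) : Finset X :=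
  Finset.univ.filter (fun x => σ x x < min (q1 x) (q2 x))

lemma mem_defic {X : Type*} [Fintype X] {q1 q2 : X → ℝ} {σ : X → X → ℝ} {x : X} :
    x ∈ defic q1 q2 σ ↔ σ x x < min (q1 x) (q2 x) := by
  classical
  simp [defic]

lemma diag_le_min {X : Type*} [Fintype X] {q1 q2 : X → ℝ} {σ : X → X → ℝ}
    (hσ : IsCoupling q1 q2 σ) (x : X) : σ x x ≤ min (q1 x) (q2 x) := by
  apply le_min
  · rw [← hσ.2.1 x]
    exact Finset.single_le_sum (fun y _ => hσ.1 x y) (Finset.mem_univ x)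
  · rw [← hσ.2.2 x]
    exact Finset.single_le_sum (fun y _ => hσ.1 y x) (Finset.mem_univ x)

lemma outer_swap {q1 q2 : (Fin k → A) → ℝ} :
    ∀ (n : ℕ) (σ : (Fin k → A) → (Fin k → A) → ℝ),
    IsCoupling q1 q2 σ → (defic q1 q2 σ).card ≤ n →
    ∃ σ', IsCoupling q1 q2 σ' ∧
      tcost cantor σ' + (2:ℝ) ^ (-(k:ℤ)) * (∑ x, (min (q1 x) (q2 x) - σ x x))
        ≤ tcost cantor σ := by
  intro n
  induction n with
  | zero =>
    intro σ hσ hcard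
    refine ⟨σ, hσ, ?_⟩
    have hempty : defic q1 q2 σ = ∅ := Finset.card_eq_zero.mp (le_antisymm hcard (by omega))
    have : ∑ x, (min (q1 x) (q2 x) - σ x x) = 0 := by
      apply Finset.sum_eq_zero
      intro x _
      have h1 : ¬ σ x x < min (q1 x) (q2 x) := by
        intro hc
        have : x ∈ defic q1 q2 σ := mem_defic.mpr hc
        rw [hempty] at this
        simp at this
      have h2 := diag_le_min hσ x
      push_neg at h1
      linarith
    rw [this, mul_zero, add_zero]
  | succ n ih =>
    intro σ hσ hcard
    rcases Finset.eq_empty_or_nonempty (defic q1 q2 σ) with hempty | ⟨w, hw⟩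
    · refine ⟨σ, hσ, ?_⟩
      have : ∑ x, (min (q1 x) (q2 x) - σ x x) = 0 := by
        apply Finset.sum_eq_zero
        intro x _
        have h1 : ¬ σ x x < min (q1 x) (q2 x) := by
          intro hc
          have : x ∈ defic q1 q2 σ := mem_defic.mpr hc
          rw [hempty] at this
          simp at this
        have h2 := diag_le_min hσ x
        push_neg at h1
        linarith
      rw [this, mul_zero, add_zero]
    · obtain ⟨σ₁, hσ₁c, hσ₁d, hσ₁w, hσ₁cost⟩ :=
        inner_swap (rowcol σ w).card σ w hσ (le_refl _)
      have hdef : defic q1 q2 σ₁ ⊆ (defic q1 q2 σ).erase w := by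
        intro x hx
        have hx' := mem_defic.mp hx
        apply Finset.mem_erase.mpr
        constructor
        · intro hc
          rw [hc] at hx'
          linarith
        · exact mem_defic.mpr (lt_of_le_of_lt (hσ₁d x) hx')
      have hcard₁ : (defic q1 q2 σ₁).card ≤ n := by
        have h1 := Finset.card_le_card hdef
        have h2 := Finset.card_erase_of_mem hw
        omega
      obtain ⟨σ', hσ'c, hσ'cost⟩ := ih σ₁ hσ₁c hcard₁
      refine ⟨σ', hσ'c, ?_⟩
      have hsplit : ∑ x, (min (q1 x) (q2 x) - σ x x)
          = (∑ x, (min (q1 x) (q2 x) - σ₁ x x)) + (∑ x, (σ₁ x x - σ x x)) := by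
        rw [← Finset.sum_add_distrib]
        exact Finset.sum_congr rfl fun x _ => by ring
      rw [hsplit, mul_add]
      linarith

/-- Key lower-bound estimate: any coupling beats the optimum by at least the
diagonal deficiency times `2^{-k}`. -/
lemma star {q1 q2 : (Fin k → A) → ℝ} {σ : (Fin k → A) → (Fin k → A) → ℝ}
    (hσ : IsCoupling q1 q2 σ) :
    kant cantor q1 q2 + (2:ℝ) ^ (-(k:ℤ)) * (∑ x, (min (q1 x) (q2 x) - σ x x))
      ≤ ∑ x, ∑ y, cantor x y * σ x y := by
  obtain ⟨σ', hσ'c, hσ'cost⟩ := outer_swap (defic q1 q2 σ).card σ hσ (le_refl _)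
  have h1 : kant cantor q1 q2 ≤ tcost cantor σ' :=
    kant_le (fun x y => cantor_nonneg x y) hσ'c
  have h2 : tcost cantor σ = ∑ x, ∑ y, cantor x y * σ x y := rfl
  rw [← h2]
  linarith

end CKR

namespace CKR
set_option linter.unusedSectionVars false
set_option maxHeartbeats 1000000

variable {A : Type*} [Fintype A] [DecidableEq A] {k : ℕ}

def snocEquiv (A : Type*) (k : ℕ) : ((Fin k → A) × A) ≃ (Fin (k+1) → A) where
  toFun p := Fin.snoc p.1 p.2
  invFun u := (Fin.init u, u (Fin.last k))
  left_inv p := by simp [Fin.init_snoc, Fin.snoc_last]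
  right_inv u := Fin.snoc_init_self u

lemma sum_snoc {M : Type*} [AddCommMonoid M] (f : (Fin (k+1) → A) → M) :
    ∑ u, f u = ∑ w : Fin k → A, ∑ a, f (Fin.snoc w a) := by
  rw [← Equiv.sum_comp (snocEquiv A k) f, Fintype.sum_prod_type]
  rfl

/-- the marginal coupling -/
lemma marg_coupling {p1 p2 : (Fin (k+1) → A) → ℝ} {π : (Fin (k+1) → A) → (Fin (k+1) → A) → ℝ}
    (hπ : IsCoupling p1 p2 π) :
    IsCoupling (fun w : Fin k → A => ∑ a, p1 (Fin.snoc w a))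
      (fun w : Fin k → A => ∑ a, p2 (Fin.snoc w a))
      (fun w w' : Fin k → A => ∑ a, ∑ b, π (Fin.snoc w a) (Fin.snoc w' b)) := by
  refine ⟨fun w w' => Finset.sum_nonneg fun a _ => Finset.sum_nonneg fun b _ => hπ.1 _ _,
    fun w => ?_, fun w' => ?_⟩
  · calc ∑ w', ∑ a, ∑ b, π (Fin.snoc w a) (Fin.snoc w' b)
        = ∑ a, ∑ w', ∑ b, π (Fin.snoc w a) (Fin.snoc w' b) := Finset.sum_comm
      _ = ∑ a, ∑ v, π (Fin.snoc w a) v := by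
          refine Finset.sum_congr rfl fun a _ => ?_
          rw [sum_snoc (fun v => π (Fin.snoc w a) v)]
      _ = ∑ a, p1 (Fin.snoc w a) := Finset.sum_congr rfl fun a _ => hπ.2.1 _
  · calc ∑ w, ∑ a, ∑ b, π (Fin.snoc w a) (Fin.snoc w' b)
        = ∑ w, ∑ b, ∑ a, π (Fin.snoc w a) (Fin.snoc w' b) :=
          Finset.sum_congr rfl fun w _ => Finset.sum_comm
      _ = ∑ b, ∑ w, ∑ a, π (Fin.snoc w a) (Fin.snoc w' b) := Finset.sum_comm
      _ = ∑ b, ∑ u, π u (Fin.snoc w' b) := by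
          refine Finset.sum_congr rfl fun b _ => ?_
          rw [sum_snoc (fun u => π u (Fin.snoc w' b))]
      _ = ∑ b, p2 (Fin.snoc w' b) := Finset.sum_congr rfl fun b _ => hπ.2.2 _

/-- cost decomposition for a coupling on words of length `k+1` -/
lemma cost_decomp (π : (Fin (k+1) → A) → (Fin (k+1) → A) → ℝ) :
    ∑ u, ∑ v, cantor u v * π u v
      = (∑ w : Fin k → A, ∑ w' : Fin k → A, cantor w w' *
            (∑ a, ∑ b, π (Fin.snoc w a) (Fin.snoc w' b)))
        + (2:ℝ) ^ (-(k:ℤ)) * ∑ w : Fin k → A,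
            ((∑ a, ∑ b, π (Fin.snoc w a) (Fin.snoc w b)) - ∑ a, π (Fin.snoc w a) (Fin.snoc w a)) := by
  rw [sum_snoc (fun u => ∑ v, cantor u v * π u v)]
  have step1 : ∀ (w : Fin k → A) (a : A), ∑ v, cantor (Fin.snoc w a : Fin (k+1) → A) v * π (Fin.snoc w a) v
      = ∑ w', ∑ b, cantor (Fin.snoc w a : Fin (k+1) → A) (Fin.snoc w' b) * π (Fin.snoc w a) (Fin.snoc w' b) := by
    intro w a
    rw [sum_snoc (fun v => cantor (Fin.snoc w a : Fin (k+1) → A) v * π (Fin.snoc w a) v)]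
  have step2 : ∀ (w w' : Fin k → A) (a b : A),
      cantor (Fin.snoc w a : Fin (k+1) → A) (Fin.snoc w' b) * π (Fin.snoc w a) (Fin.snoc w' b)
        = cantor w w' * π (Fin.snoc w a) (Fin.snoc w' b)
          + (if w = w' ∧ a ≠ b then (2:ℝ) ^ (-(k:ℤ)) else 0) * π (Fin.snoc w a) (Fin.snoc w' b) := by
    intro w w' a b
    rw [cantor_snoc]
    ring
  calc ∑ w : Fin k → A, ∑ a, ∑ v, cantor (Fin.snoc w a : Fin (k+1) → A) v * π (Fin.snoc w a) v
      = ∑ w : Fin k → A, ∑ a, ∑ w', ∑ b,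
          (cantor w w' * π (Fin.snoc w a) (Fin.snoc w' b)
            + (if w = w' ∧ a ≠ b then (2:ℝ) ^ (-(k:ℤ)) else 0) * π (Fin.snoc w a) (Fin.snoc w' b)) := by
        refine Finset.sum_congr rfl fun w _ => Finset.sum_congr rfl fun a _ => ?_
        rw [step1 w a]
        exact Finset.sum_congr rfl fun w' _ => Finset.sum_congr rfl fun b _ => step2 w w' a b
    _ = (∑ w : Fin k → A, ∑ a, ∑ w', ∑ b, cantor w w' * π (Fin.snoc w a) (Fin.snoc w' b))
        + ∑ w : Fin k → A, ∑ a, ∑ w', ∑ b,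
            (if w = w' ∧ a ≠ b then (2:ℝ) ^ (-(k:ℤ)) else 0) * π (Fin.snoc w a) (Fin.snoc w' b) := by
        rw [← Finset.sum_add_distrib]
        refine Finset.sum_congr rfl fun w _ => ?_
        rw [← Finset.sum_add_distrib]
        refine Finset.sum_congr rfl fun a _ => ?_
        rw [← Finset.sum_add_distrib]
        refine Finset.sum_congr rfl fun w' _ => ?_
        rw [← Finset.sum_add_distrib]
    _ = (∑ w : Fin k → A, ∑ w' : Fin k → A, cantor w w' *
            (∑ a, ∑ b, π (Fin.snoc w a) (Fin.snoc w' b)))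
        + (2:ℝ) ^ (-(k:ℤ)) * ∑ w : Fin k → A,
            ((∑ a, ∑ b, π (Fin.snoc w a) (Fin.snoc w b)) - ∑ a, π (Fin.snoc w a) (Fin.snoc w a)) := by
        congr 1
        · refine Finset.sum_congr rfl fun w _ => ?_
          rw [Finset.sum_comm]
          refine Finset.sum_congr rfl fun w' _ => ?_
          rw [Finset.mul_sum]
          refine Finset.sum_congr rfl fun a _ => ?_
          rw [Finset.mul_sum]
        · rw [Finset.mul_sum]
          refine Finset.sum_congr rfl fun w _ => ?_
          have hw' : ∀ a : A, ∑ w' : Fin k → A, ∑ b,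
              (if w = w' ∧ a ≠ b then (2:ℝ) ^ (-(k:ℤ)) else 0) * π (Fin.snoc w a) (Fin.snoc w' b)
              = ∑ b, (if a ≠ b then (2:ℝ) ^ (-(k:ℤ)) else 0) * π (Fin.snoc w a) (Fin.snoc w b) := by
            intro a
            rw [Finset.sum_eq_single w]
            · refine Finset.sum_congr rfl fun b _ => ?_
              congr 1
              simp
            · intro w' _ hne
              apply Finset.sum_eq_zero
              intro b _
              rw [if_neg (fun h => hne h.1.symm), zero_mul]
            · intro h
              exact absurd (Finset.mem_univ w) h
          rw [Finset.sum_congr rfl fun a _ => hw' a]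
          have hsplit : ∀ a b : A, (if a ≠ b then (2:ℝ) ^ (-(k:ℤ)) else 0) * π (Fin.snoc w a) (Fin.snoc w b)
              = (2:ℝ) ^ (-(k:ℤ)) * π (Fin.snoc w a) (Fin.snoc w b)
                - (if a = b then (2:ℝ) ^ (-(k:ℤ)) else 0) * π (Fin.snoc w a) (Fin.snoc w b) := by
            intro a b
            by_cases hab : a = b <;> simp [hab]
          rw [Finset.sum_congr rfl fun a _ => Finset.sum_congr rfl fun b _ => hsplit a b]
          have hdiag : ∀ a : A, ∑ b, (if a = b then (2:ℝ) ^ (-(k:ℤ)) else 0) * π (Fin.snoc w a) (Fin.snoc w b)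
              = (2:ℝ) ^ (-(k:ℤ)) * π (Fin.snoc w a) (Fin.snoc w a) := by
            intro a
            simp [ite_mul]
          calc ∑ a, ∑ b, ((2:ℝ) ^ (-(k:ℤ)) * π (Fin.snoc w a) (Fin.snoc w b)
                - (if a = b then (2:ℝ) ^ (-(k:ℤ)) else 0) * π (Fin.snoc w a) (Fin.snoc w b))
              = ∑ a, ((∑ b, (2:ℝ) ^ (-(k:ℤ)) * π (Fin.snoc w a) (Fin.snoc w b))
                - (2:ℝ) ^ (-(k:ℤ)) * π (Fin.snoc w a) (Fin.snoc w a)) := by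
                refine Finset.sum_congr rfl fun a _ => ?_
                rw [Finset.sum_sub_distrib, hdiag a]
            _ = (2:ℝ) ^ (-(k:ℤ)) * ((∑ a, ∑ b, π (Fin.snoc w a) (Fin.snoc w b))
                - ∑ a, π (Fin.snoc w a) (Fin.snoc w a)) := by
                rw [Finset.sum_sub_distrib]
                rw [mul_sub]
                congr 1
                · rw [Finset.mul_sum]
                  exact Finset.sum_congr rfl fun a _ => by rw [Finset.mul_sum]
                · rw [Finset.mul_sum]

end CKR

namespace CKR
set_option linter.unusedSectionVars false
set_option maxHeartbeats 1000000

variable {A : Type*} [Fintype A] [DecidableEq A] {k : ℕ}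

lemma lower_bound {p1 p2 : (Fin (k+1) → A) → ℝ} (hp1 : IsProbDist p1) (hp2 : IsProbDist p2) :
    kant cantor (fun w : Fin k → A => ∑ a, p1 (Fin.snoc w a))
        (fun w : Fin k → A => ∑ a, p2 (Fin.snoc w a))
      + (2:ℝ) ^ (-(k:ℤ)) * ∑ w : Fin k → A,
          (min (∑ a, p1 (Fin.snoc w a)) (∑ a, p2 (Fin.snoc w a))
            - ∑ a, min (p1 (Fin.snoc w a)) (p2 (Fin.snoc w a)))
      ≤ kant cantor p1 p2 := by
  set q1 : (Fin k → A) → ℝ := fun w => ∑ a, p1 (Fin.snoc w a) with hq1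
  set q2 : (Fin k → A) → ℝ := fun w => ∑ a, p2 (Fin.snoc w a) with hq2
  apply le_kant ⟨_, prod_isCoupling hp1 hp2⟩
  intro π hπ
  set σ : (Fin k → A) → (Fin k → A) → ℝ :=
    fun w w' => ∑ a, ∑ b, π (Fin.snoc w a) (Fin.snoc w' b) with hσ
  have hσc : IsCoupling q1 q2 σ := marg_coupling hπ
  have hstar := star (k := k) hσc
  have hdecomp := cost_decomp (k := k) π
  have hcost : ∀ u v, cantor u v * π u v = cantor u v * π u v := fun _ _ => rfl
  -- π's diagonal entries are at most the min of the marginals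
  have hdiag : ∀ w : Fin k → A, ∑ a, min (p1 (Fin.snoc w a)) (p2 (Fin.snoc w a))
      ≥ ∑ a, π (Fin.snoc w a) (Fin.snoc w a) := by
    intro w
    apply Finset.sum_le_sum
    intro a _
    exact diag_le_min hπ (Fin.snoc w a)
  have hc : (0:ℝ) ≤ (2:ℝ) ^ (-(k:ℤ)) := by positivity
  have hT2 : ∑ w : Fin k → A, (σ w w - ∑ a, min (p1 (Fin.snoc w a)) (p2 (Fin.snoc w a)))
      ≤ ∑ w : Fin k → A, (σ w w - ∑ a, π (Fin.snoc w a) (Fin.snoc w a)) := by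
    apply Finset.sum_le_sum
    intro w _
    have := hdiag w
    linarith
  -- combine the deficiency sums
  have hcomb : ∑ w : Fin k → A, (min (q1 w) (q2 w)
        - ∑ a, min (p1 (Fin.snoc w a)) (p2 (Fin.snoc w a)))
      = (∑ w : Fin k → A, (min (q1 w) (q2 w) - σ w w))
        + ∑ w : Fin k → A, (σ w w - ∑ a, min (p1 (Fin.snoc w a)) (p2 (Fin.snoc w a))) := by
    rw [← Finset.sum_add_distrib]
    exact Finset.sum_congr rfl fun w _ => by ring
  -- hdecomp: total cost = marginal cost + c * offdiag
  rw [hdecomp]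
  have hT2' : (2:ℝ) ^ (-(k:ℤ)) *
        (∑ w : Fin k → A, (σ w w - ∑ a, min (p1 (Fin.snoc w a)) (p2 (Fin.snoc w a))))
      ≤ (2:ℝ) ^ (-(k:ℤ)) * ∑ w : Fin k → A,
          ((∑ a, ∑ b, π (Fin.snoc w a) (Fin.snoc w b)) - ∑ a, π (Fin.snoc w a) (Fin.snoc w a)) := by
    apply mul_le_mul_of_nonneg_left _ hc
    apply Finset.sum_le_sum
    intro w _
    have := hdiag w
    have hσww : σ w w = ∑ a, ∑ b, π (Fin.snoc w a) (Fin.snoc w b) := rfl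
    rw [← hσww]
    linarith
  rw [hcomb, mul_add]
  linarith

end CKR

namespace CKR
set_option linter.unusedSectionVars false
set_option maxHeartbeats 4000000

variable {A : Type*} [Fintype A] [DecidableEq A] {k : ℕ}

lemma lift {p1 p2 : (Fin (k+1) → A) → ℝ} (hp1 : IsProbDist p1) (hp2 : IsProbDist p2)
    {σ : (Fin k → A) → (Fin k → A) → ℝ}
    (hσ : IsCoupling (fun w : Fin k → A => ∑ a, p1 (Fin.snoc w a))
      (fun w : Fin k → A => ∑ a, p2 (Fin.snoc w a)) σ) :
    ∃ π : (Fin (k+1) → A) → (Fin (k+1) → A) → ℝ, IsCoupling p1 p2 π ∧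
      ∑ u, ∑ v, cantor u v * π u v
        ≤ (∑ w : Fin k → A, ∑ w' : Fin k → A, cantor w w' * σ w w')
          + (2:ℝ) ^ (-(k:ℤ)) * ∑ w : Fin k → A,
              (min (∑ a, p1 (Fin.snoc w a)) (∑ a, p2 (Fin.snoc w a))
                - ∑ a, min (p1 (Fin.snoc w a)) (p2 (Fin.snoc w a))) := by
  classical
  set q1 : (Fin k → A) → ℝ := fun w => ∑ a, p1 (Fin.snoc w a) with hq1def
  set q2 : (Fin k → A) → ℝ := fun w => ∑ a, p2 (Fin.snoc w a) with hq2def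
  set m : (Fin k → A) → ℝ := fun w => min (q1 w) (q2 w) with hmdef
  set μ : (Fin (k+1) → A) → ℝ := fun u => min (p1 u) (p2 u) with hμdef
  set d : (Fin (k+1) → A) → ℝ :=
    fun u => if m (Fin.init u) = 0 then 0
      else μ u * σ (Fin.init u) (Fin.init u) / m (Fin.init u) with hddef
  set D : (Fin k → A) → ℝ := fun w => ∑ a, d (Fin.snoc w a) with hDdef
  set f1 : (Fin (k+1) → A) → ℝ :=
    fun u => if q1 (Fin.init u) - D (Fin.init u) = 0 then 0
      else (p1 u - d u) / (q1 (Fin.init u) - D (Fin.init u)) with hf1def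
  set f2 : (Fin (k+1) → A) → ℝ :=
    fun u => if q2 (Fin.init u) - D (Fin.init u) = 0 then 0
      else (p2 u - d u) / (q2 (Fin.init u) - D (Fin.init u)) with hf2def
  set π : (Fin (k+1) → A) → (Fin (k+1) → A) → ℝ :=
    fun u v => (if u = v then d u else 0)
      + (σ (Fin.init u) (Fin.init v)
          - if Fin.init u = Fin.init v then D (Fin.init u) else 0) * f1 u * f2 v with hπdef
  -- elementary facts
  have hq1nn : ∀ w, 0 ≤ q1 w := fun w => Finset.sum_nonneg fun a _ => hp1.1 _
  have hq2nn : ∀ w, 0 ≤ q2 w := fun w => Finset.sum_nonneg fun a _ => hp2.1 _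
  have hmnn : ∀ w, 0 ≤ m w := fun w => le_min (hq1nn w) (hq2nn w)
  have hμnn : ∀ u, 0 ≤ μ u := fun u => le_min (hp1.1 u) (hp2.1 u)
  have hσnn := hσ.1
  have htm : ∀ w, σ w w ≤ m w := fun w => diag_le_min hσ w
  have hsμ : ∀ w, ∑ a, μ (Fin.snoc w a) ≤ m w := by
    intro w
    apply le_min
    · exact Finset.sum_le_sum fun a _ => min_le_left _ _
    · exact Finset.sum_le_sum fun a _ => min_le_right _ _
  have hdval : ∀ (w : Fin k → A) (a : A), d (Fin.snoc w a)
      = if m w = 0 then 0 else μ (Fin.snoc w a) * σ w w / m w := by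
    intro w a
    rw [hddef]
    simp only [Fin.init_snoc]
  have hdnn : ∀ u, 0 ≤ d u := by
    intro u
    rw [hddef]
    dsimp only
    split
    · exact le_refl 0
    · exact div_nonneg (mul_nonneg (hμnn u) (hσnn _ _)) (hmnn _)
  have hdμ : ∀ u, d u ≤ μ u := by
    intro u
    rw [hddef]
    dsimp only
    split
    · exact hμnn u
    · rename_i hm0
      have hmpos : 0 < m (Fin.init u) := lt_of_le_of_ne (hmnn _) (Ne.symm hm0)
      rw [div_le_iff₀ hmpos]
      have h1 : σ (Fin.init u) (Fin.init u) ≤ m (Fin.init u) := htm _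
      nlinarith [hμnn u]
  have hdp1 : ∀ u, d u ≤ p1 u := fun u => le_trans (hdμ u) (min_le_left _ _)
  have hdp2 : ∀ u, d u ≤ p2 u := fun u => le_trans (hdμ u) (min_le_right _ _)
  have hDval : ∀ w, D w = if m w = 0 then 0 else (∑ a, μ (Fin.snoc w a)) * σ w w / m w := by
    intro w
    rw [hDdef]
    dsimp only
    rw [Finset.sum_congr rfl fun a _ => hdval w a]
    split
    · simp
    · rw [← Finset.sum_div, ← Finset.sum_mul]
  have hDnn : ∀ w, 0 ≤ D w := fun w => Finset.sum_nonneg fun a _ => hdnn _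
  have hDt : ∀ w, D w ≤ σ w w := by
    intro w
    rw [hDval]
    split
    · exact hσnn w w
    · rename_i hm0
      have hmpos : 0 < m w := lt_of_le_of_ne (hmnn _) (Ne.symm hm0)
      rw [div_le_iff₀ hmpos]
      nlinarith [hsμ w, hσnn w w, htm w]
  have htDm : ∀ w, σ w w - D w ≤ m w - ∑ a, μ (Fin.snoc w a) := by
    intro w
    rw [hDval]
    split
    · rename_i hm0
      have h1 : σ w w ≤ m w := htm w
      have h2 : 0 ≤ σ w w := hσnn w w
      have h3 : ∑ a, μ (Fin.snoc w a) ≤ m w := hsμ w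
      have h4 : 0 ≤ ∑ a, μ (Fin.snoc w a) := Finset.sum_nonneg fun a _ => hμnn _
      rw [hm0] at h1 h3
      linarith
    · rename_i hm0
      have hmpos : 0 < m w := lt_of_le_of_ne (hmnn _) (Ne.symm hm0)
      have key : (σ w w - (∑ a, μ (Fin.snoc w a)) * σ w w / m w) * m w
          ≤ (m w - ∑ a, μ (Fin.snoc w a)) * m w := by
        have he : (σ w w - (∑ a, μ (Fin.snoc w a)) * σ w w / m w) * m w
            = σ w w * m w - (∑ a, μ (Fin.snoc w a)) * σ w w := by
          field_simp
        rw [he]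
        nlinarith [htm w, hsμ w, hσnn w w, Finset.sum_nonneg fun (a : A) (_ : a ∈ Finset.univ) => hμnn (Fin.snoc w a)]
      exact le_of_mul_le_mul_right key hmpos
  have htq1 : ∀ w, σ w w ≤ q1 w := fun w => le_trans (htm w) (min_le_left _ _)
  have htq2 : ∀ w, σ w w ≤ q2 w := fun w => le_trans (htm w) (min_le_right _ _)
  have hE1nn : ∀ w, 0 ≤ q1 w - D w := by
    intro w
    have := hDt w
    have := htq1 w
    linarith
  have hE2nn : ∀ w, 0 ≤ q2 w - D w := by
    intro w
    have := hDt w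
    have := htq2 w
    linarith
  have hf1val : ∀ (w : Fin k → A) (a : A), f1 (Fin.snoc w a)
      = if q1 w - D w = 0 then 0 else (p1 (Fin.snoc w a) - d (Fin.snoc w a)) / (q1 w - D w) := by
    intro w a
    rw [hf1def]
    simp only [Fin.init_snoc]
  have hf2val : ∀ (w : Fin k → A) (a : A), f2 (Fin.snoc w a)
      = if q2 w - D w = 0 then 0 else (p2 (Fin.snoc w a) - d (Fin.snoc w a)) / (q2 w - D w) := by
    intro w a
    rw [hf2def]
    simp only [Fin.init_snoc]
  have hf1nn : ∀ u, 0 ≤ f1 u := by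
    intro u
    rw [hf1def]
    dsimp only
    split
    · exact le_refl 0
    · rename_i h0
      apply div_nonneg
      · have := hdp1 u; linarith
      · exact hE1nn _
  have hf2nn : ∀ u, 0 ≤ f2 u := by
    intro u
    rw [hf2def]
    dsimp only
    split
    · exact le_refl 0
    · rename_i h0
      apply div_nonneg
      · have := hdp2 u; linarith
      · exact hE2nn _
  have hsum_pd1 : ∀ w, ∑ a, (p1 (Fin.snoc w a) - d (Fin.snoc w a)) = q1 w - D w := by
    intro w
    rw [Finset.sum_sub_distrib, hDdef]
  have hsum_pd2 : ∀ w, ∑ a, (p2 (Fin.snoc w a) - d (Fin.snoc w a)) = q2 w - D w := by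
    intro w
    rw [Finset.sum_sub_distrib, hDdef]
  have hsumf1 : ∀ w, ∑ a, f1 (Fin.snoc w a) = if q1 w - D w = 0 then 0 else 1 := by
    intro w
    rw [Finset.sum_congr rfl fun a _ => hf1val w a]
    by_cases h0 : q1 w - D w = 0
    · simp [h0]
    · rw [if_neg h0, Finset.sum_congr rfl fun a _ => if_neg h0, ← Finset.sum_div,
        hsum_pd1, div_self h0]
  have hsumf2 : ∀ w, ∑ a, f2 (Fin.snoc w a) = if q2 w - D w = 0 then 0 else 1 := by
    intro w
    rw [Finset.sum_congr rfl fun a _ => hf2val w a]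
    by_cases h0 : q2 w - D w = 0
    · simp [h0]
    · rw [if_neg h0, Finset.sum_congr rfl fun a _ => if_neg h0, ← Finset.sum_div,
        hsum_pd2, div_self h0]
  have hsumf1le : ∀ w, ∑ a, f1 (Fin.snoc w a) ≤ 1 := by
    intro w; rw [hsumf1]; split <;> norm_num
  have hsumf2le : ∀ w, ∑ a, f2 (Fin.snoc w a) ≤ 1 := by
    intro w; rw [hsumf2]; split <;> norm_num
  -- degeneracy facts for E1 = 0
  have hE1zero : ∀ w, q1 w - D w = 0 →
      (∀ a, p1 (Fin.snoc w a) = d (Fin.snoc w a)) ∧ σ w w - D w = 0 ∧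
        (∀ w', w' ≠ w → σ w w' = 0) := by
    intro w h0
    have hpd : ∀ a, p1 (Fin.snoc w a) = d (Fin.snoc w a) := by
      intro a
      have hz : ∑ a, (p1 (Fin.snoc w a) - d (Fin.snoc w a)) = 0 := by rw [hsum_pd1 w, h0]
      have := (Finset.sum_eq_zero_iff_of_nonneg
        (fun a _ => by have := hdp1 (Fin.snoc w a); linarith)).mp hz a (Finset.mem_univ a)
      linarith
    have hσq : σ w w = q1 w := by
      have := hDt w
      have := htq1 w
      linarith
    refine ⟨hpd, by linarith [hDt w], ?_⟩
    intro w' hw'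
    have hrow := hσ.2.1 w
    have herase : ∑ y ∈ Finset.univ.erase w, σ w y = 0 := by
      have : ∑ y, σ w y = σ w w + ∑ y ∈ Finset.univ.erase w, σ w y :=
        (Finset.add_sum_erase _ _ (Finset.mem_univ w)).symm
      rw [hrow] at this
      rw [hσq] at this
      linarith
    have := (Finset.sum_eq_zero_iff_of_nonneg
      (fun y _ => hσnn w y)).mp herase w' (Finset.mem_erase.mpr ⟨hw', Finset.mem_univ w'⟩)
    exact this
  have hE2zero : ∀ w', q2 w' - D w' = 0 →
      (∀ a, p2 (Fin.snoc w' a) = d (Fin.snoc w' a)) ∧ σ w' w' - D w' = 0 ∧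
        (∀ w, w ≠ w' → σ w w' = 0) := by
    intro w' h0
    have hpd : ∀ a, p2 (Fin.snoc w' a) = d (Fin.snoc w' a) := by
      intro a
      have hz : ∑ a, (p2 (Fin.snoc w' a) - d (Fin.snoc w' a)) = 0 := by rw [hsum_pd2 w', h0]
      have := (Finset.sum_eq_zero_iff_of_nonneg
        (fun a _ => by have := hdp2 (Fin.snoc w' a); linarith)).mp hz a (Finset.mem_univ a)
      linarith
    have hσq : σ w' w' = q2 w' := by
      have := hDt w'
      have := htq2 w'
      linarith
    refine ⟨hpd, by linarith [hDt w'], ?_⟩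
    intro w hw
    have hcol := hσ.2.2 w'
    have herase : ∑ x ∈ Finset.univ.erase w', σ x w' = 0 := by
      have : ∑ x, σ x w' = σ w' w' + ∑ x ∈ Finset.univ.erase w', σ x w' :=
        (Finset.add_sum_erase _ _ (Finset.mem_univ w')).symm
      rw [hcol] at this
      rw [hσq] at this
      linarith
    exact (Finset.sum_eq_zero_iff_of_nonneg
      (fun x _ => hσnn x w')).mp herase w (Finset.mem_erase.mpr ⟨hw, Finset.mem_univ w⟩)
  -- block coefficients are nonnegative
  have hblock : ∀ w w', 0 ≤ σ w w' - (if w = w' then D w else 0) := by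
    intro w w'
    by_cases h : w = w'
    · rw [if_pos h, ← h]
      have := hDt w
      linarith
    · rw [if_neg h, sub_zero]
      exact hσnn w w'
  have hblockle : ∀ w w', σ w w' - (if w = w' then D w else 0) ≤ σ w w' := by
    intro w w'
    split
    · have := hDnn w; linarith
    · simp
  -- the "kill" identity for the row sums
  have hkill_row : ∀ (w w' : Fin k → A),
      (σ w w' - (if w = w' then D w else 0)) * (if q2 w' - D w' = 0 then 0 else 1)
        = σ w w' - (if w = w' then D w else 0) := by
    intro w w'
    by_cases h0 : q2 w' - D w' = 0
    · rw [if_pos h0, mul_zero]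
      obtain ⟨-, hdiag, hcolz⟩ := hE2zero w' h0
      by_cases hww : w = w'
      · rw [if_pos hww, hww]
        linarith
      · rw [if_neg hww, hcolz w hww]
        ring
    · rw [if_neg h0, mul_one]
  have hkill_col : ∀ (w w' : Fin k → A),
      (σ w w' - (if w = w' then D w else 0)) * (if q1 w - D w = 0 then 0 else 1)
        = σ w w' - (if w = w' then D w else 0) := by
    intro w w'
    by_cases h0 : q1 w - D w = 0
    · rw [if_pos h0, mul_zero]
      obtain ⟨-, hdiag, hrowz⟩ := hE1zero w h0
      by_cases hww : w = w'
      · rw [if_pos hww, ← hww]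
        linarith
      · rw [if_neg hww, hrowz w' (fun h => hww h.symm)]
        ring
    · rw [if_neg h0, mul_one]
  -- nonnegativity of π
  have hπval : ∀ u v, π u v = (if u = v then d u else 0)
      + (σ (Fin.init u) (Fin.init v)
          - if Fin.init u = Fin.init v then D (Fin.init u) else 0) * f1 u * f2 v :=
    fun u v => rfl
  have hπnn : ∀ u v, 0 ≤ π u v := by
    intro u v
    rw [hπval]
    have h1 : 0 ≤ (if u = v then d u else 0) := by
      split
      · exact hdnn u
      · exact le_refl 0
    have h2 := mul_nonneg (mul_nonneg (hblock (Fin.init u) (Fin.init v)) (hf1nn u)) (hf2nn v)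
    linarith
  -- row marginals
  have hπrow : ∀ u, ∑ v, π u v = p1 u := by
    intro u
    have hu : Fin.snoc (Fin.init u) (u (Fin.last k)) = u := Fin.snoc_init_self u
    have hsplit : ∑ v, π u v = (∑ v, if u = v then d u else 0)
        + ∑ v, (σ (Fin.init u) (Fin.init v)
            - if Fin.init u = Fin.init v then D (Fin.init u) else 0) * f1 u * f2 v := by
      rw [← Finset.sum_add_distrib]
    have hfirst : (∑ v, if u = v then d u else 0) = d u := by simp
    have hsecond : ∑ v, (σ (Fin.init u) (Fin.init v)
        - if Fin.init u = Fin.init v then D (Fin.init u) else 0) * f1 u * f2 v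
        = (q1 (Fin.init u) - D (Fin.init u)) * f1 u := by
      rw [sum_snoc (fun v => (σ (Fin.init u) (Fin.init v)
        - if Fin.init u = Fin.init v then D (Fin.init u) else 0) * f1 u * f2 v)]
      simp only [Fin.init_snoc]
      have hwsum : ∀ w' : Fin k → A, ∑ b, (σ (Fin.init u) w'
          - if Fin.init u = w' then D (Fin.init u) else 0) * f1 u * f2 (Fin.snoc w' b)
          = (σ (Fin.init u) w' - if Fin.init u = w' then D (Fin.init u) else 0) * f1 u := by
        intro w'
        rw [← Finset.mul_sum, hsumf2 w']
        have := hkill_row (Fin.init u) w'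
        calc (σ (Fin.init u) w' - if Fin.init u = w' then D (Fin.init u) else 0) * f1 u *
              (if q2 w' - D w' = 0 then 0 else 1)
            = ((σ (Fin.init u) w' - if Fin.init u = w' then D (Fin.init u) else 0) *
              (if q2 w' - D w' = 0 then 0 else 1)) * f1 u := by ring
          _ = (σ (Fin.init u) w' - if Fin.init u = w' then D (Fin.init u) else 0) * f1 u := by
              rw [this]
      rw [Finset.sum_congr rfl fun w' _ => hwsum w']
      rw [← Finset.sum_mul]
      congr 1
      rw [Finset.sum_sub_distrib, hσ.2.1 (Fin.init u)]
      congr 1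
      simp
    rw [hsplit, hfirst, hsecond]
    by_cases h0 : q1 (Fin.init u) - D (Fin.init u) = 0
    · have hf10 : f1 u = 0 := by
        rw [hf1def]
        dsimp only
        rw [if_pos h0]
      rw [hf10, mul_zero, add_zero]
      have := (hE1zero (Fin.init u) h0).1 (u (Fin.last k))
      rw [hu] at this
      exact this.symm
    · have hf1v : f1 u = (p1 u - d u) / (q1 (Fin.init u) - D (Fin.init u)) := by
        rw [hf1def]
        dsimp only
        rw [if_neg h0]
      rw [hf1v, mul_comm, div_mul_cancel₀ _ h0]
      ring
  -- column marginals
  have hπcol : ∀ v, ∑ u, π u v = p2 v := by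
    intro v
    have hv : Fin.snoc (Fin.init v) (v (Fin.last k)) = v := Fin.snoc_init_self v
    have hsplit : ∑ u, π u v = (∑ u, if u = v then d u else 0)
        + ∑ u, (σ (Fin.init u) (Fin.init v)
            - if Fin.init u = Fin.init v then D (Fin.init u) else 0) * f1 u * f2 v := by
      rw [← Finset.sum_add_distrib]
    have hfirst : (∑ u, if u = v then d u else 0) = d v := by simp
    have hsecond : ∑ u, (σ (Fin.init u) (Fin.init v)
        - if Fin.init u = Fin.init v then D (Fin.init u) else 0) * f1 u * f2 v
        = (q2 (Fin.init v) - D (Fin.init v)) * f2 v := by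
      rw [sum_snoc (fun u => (σ (Fin.init u) (Fin.init v)
        - if Fin.init u = Fin.init v then D (Fin.init u) else 0) * f1 u * f2 v)]
      simp only [Fin.init_snoc]
      have hwsum : ∀ w : Fin k → A, ∑ a, (σ w (Fin.init v)
          - if w = Fin.init v then D w else 0) * f1 (Fin.snoc w a) * f2 v
          = (σ w (Fin.init v) - if w = Fin.init v then D w else 0) * f2 v := by
        intro w
        have hstep : ∀ a : A, (σ w (Fin.init v) - if w = Fin.init v then D w else 0)
            * f1 (Fin.snoc w a) * f2 v
            = ((σ w (Fin.init v) - if w = Fin.init v then D w else 0) * f2 v)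
              * f1 (Fin.snoc w a) := by
          intro a; ring
        rw [Finset.sum_congr rfl fun a _ => hstep a, ← Finset.mul_sum, hsumf1 w]
        have := hkill_col w (Fin.init v)
        calc (σ w (Fin.init v) - if w = Fin.init v then D w else 0) * f2 v *
              (if q1 w - D w = 0 then 0 else 1)
            = ((σ w (Fin.init v) - if w = Fin.init v then D w else 0)
                * (if q1 w - D w = 0 then 0 else 1)) * f2 v := by ring
          _ = (σ w (Fin.init v) - if w = Fin.init v then D w else 0) * f2 v := by rw [this]
      rw [Finset.sum_congr rfl fun w _ => hwsum w]
      rw [← Finset.sum_mul]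
      congr 1
      rw [Finset.sum_sub_distrib, hσ.2.2 (Fin.init v)]
      congr 1
      simp
    rw [hsplit, hfirst, hsecond]
    by_cases h0 : q2 (Fin.init v) - D (Fin.init v) = 0
    · have hf20 : f2 v = 0 := by
        rw [hf2def]
        dsimp only
        rw [if_pos h0]
      rw [hf20, mul_zero, add_zero]
      have := (hE2zero (Fin.init v) h0).1 (v (Fin.last k))
      rw [hv] at this
      exact this.symm
    · have hf2v : f2 v = (p2 v - d v) / (q2 (Fin.init v) - D (Fin.init v)) := by
        rw [hf2def]
        dsimp only
        rw [if_neg h0]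
      rw [hf2v, mul_comm, div_mul_cancel₀ _ h0]
      ring
  -- the cost bound
  have hcnn : (0:ℝ) ≤ (2:ℝ) ^ (-(k:ℤ)) := by positivity
  have hGval : ∀ (w w' : Fin k → A) (a b : A),
      (σ (Fin.init (Fin.snoc w a : Fin (k+1) → A)) (Fin.init (Fin.snoc w' b : Fin (k+1) → A))
        - if Fin.init (Fin.snoc w a : Fin (k+1) → A) = Fin.init (Fin.snoc w' b : Fin (k+1) → A)
          then D (Fin.init (Fin.snoc w a : Fin (k+1) → A)) else 0)
        = (σ w w' - if w = w' then D w else 0) := by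
    intro w w' a b
    simp only [Fin.init_snoc]
  have hcost : ∑ u, ∑ v, cantor u v * π u v
      ≤ (∑ w : Fin k → A, ∑ w' : Fin k → A, cantor w w' * σ w w')
        + (2:ℝ) ^ (-(k:ℤ)) * ∑ w : Fin k → A, (m w - ∑ a, μ (Fin.snoc w a)) := by
    have hzero : ∀ u, ∑ v, cantor u v * (if u = v then d u else 0) = 0 := by
      intro u
      apply Finset.sum_eq_zero
      intro v _
      by_cases h : u = v
      · rw [h, cantor_self, zero_mul]
      · rw [if_neg h, mul_zero]
    have hsplitcost : ∑ u, ∑ v, cantor u v * π u v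
        = ∑ u, ∑ v, cantor u v * ((σ (Fin.init u) (Fin.init v)
            - if Fin.init u = Fin.init v then D (Fin.init u) else 0) * f1 u * f2 v) := by
      calc ∑ u, ∑ v, cantor u v * π u v
          = ∑ u, ((∑ v, cantor u v * (if u = v then d u else 0))
            + ∑ v, cantor u v * ((σ (Fin.init u) (Fin.init v)
              - if Fin.init u = Fin.init v then D (Fin.init u) else 0) * f1 u * f2 v)) := by
            refine Finset.sum_congr rfl fun u _ => ?_
            rw [← Finset.sum_add_distrib]
            refine Finset.sum_congr rfl fun v _ => ?_
            rw [hπval]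
            ring
        _ = ∑ u, ∑ v, cantor u v * ((σ (Fin.init u) (Fin.init v)
            - if Fin.init u = Fin.init v then D (Fin.init u) else 0) * f1 u * f2 v) := by
            refine Finset.sum_congr rfl fun u _ => ?_
            rw [hzero u, zero_add]
    rw [hsplitcost]
    -- expand into snoc coordinates
    rw [sum_snoc (fun u => ∑ v, cantor u v * ((σ (Fin.init u) (Fin.init v)
      - if Fin.init u = Fin.init v then D (Fin.init u) else 0) * f1 u * f2 v))]
    have hinner : ∀ (w : Fin k → A) (a : A),
        ∑ v, cantor (Fin.snoc w a : Fin (k+1) → A) v * ((σ (Fin.init (Fin.snoc w a : Fin (k+1) → A)) (Fin.init v)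
          - if Fin.init (Fin.snoc w a : Fin (k+1) → A) = Fin.init v
            then D (Fin.init (Fin.snoc w a : Fin (k+1) → A)) else 0) * f1 (Fin.snoc w a) * f2 v)
        = ∑ w' : Fin k → A, ∑ b, (cantor w w'
              * ((σ w w' - if w = w' then D w else 0) * f1 (Fin.snoc w a) * f2 (Fin.snoc w' b))
            + (if w = w' ∧ a ≠ b then (2:ℝ) ^ (-(k:ℤ)) else 0)
              * ((σ w w' - if w = w' then D w else 0) * f1 (Fin.snoc w a) * f2 (Fin.snoc w' b))) := by
      intro w a
      rw [sum_snoc (fun v => cantor (Fin.snoc w a : Fin (k+1) → A) v * ((σ (Fin.init (Fin.snoc w a : Fin (k+1) → A)) (Fin.init v)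
        - if Fin.init (Fin.snoc w a : Fin (k+1) → A) = Fin.init v
          then D (Fin.init (Fin.snoc w a : Fin (k+1) → A)) else 0) * f1 (Fin.snoc w a) * f2 v))]
      refine Finset.sum_congr rfl fun w' _ => Finset.sum_congr rfl fun b _ => ?_
      simp only [Fin.init_snoc]
      rw [cantor_snoc]
      ring
    rw [Finset.sum_congr rfl fun w _ => Finset.sum_congr rfl fun a _ => hinner w a]
    -- split the two parts
    have hsplit4 : ∑ w : Fin k → A, ∑ a, ∑ w' : Fin k → A, ∑ b, (cantor w w'
            * ((σ w w' - if w = w' then D w else 0) * f1 (Fin.snoc w a) * f2 (Fin.snoc w' b))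
          + (if w = w' ∧ a ≠ b then (2:ℝ) ^ (-(k:ℤ)) else 0)
            * ((σ w w' - if w = w' then D w else 0) * f1 (Fin.snoc w a) * f2 (Fin.snoc w' b)))
        = (∑ w : Fin k → A, ∑ a, ∑ w' : Fin k → A, ∑ b, cantor w w'
            * ((σ w w' - if w = w' then D w else 0) * f1 (Fin.snoc w a) * f2 (Fin.snoc w' b)))
          + ∑ w : Fin k → A, ∑ a, ∑ w' : Fin k → A, ∑ b,
            (if w = w' ∧ a ≠ b then (2:ℝ) ^ (-(k:ℤ)) else 0)
            * ((σ w w' - if w = w' then D w else 0) * f1 (Fin.snoc w a) * f2 (Fin.snoc w' b)) := by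
      rw [← Finset.sum_add_distrib]
      refine Finset.sum_congr rfl fun w _ => ?_
      rw [← Finset.sum_add_distrib]
      refine Finset.sum_congr rfl fun a _ => ?_
      rw [← Finset.sum_add_distrib]
      refine Finset.sum_congr rfl fun w' _ => ?_
      rw [← Finset.sum_add_distrib]
    rw [hsplit4]
    -- bound part 1
    have hpart1 : ∑ w : Fin k → A, ∑ a, ∑ w' : Fin k → A, ∑ b, cantor w w'
          * ((σ w w' - if w = w' then D w else 0) * f1 (Fin.snoc w a) * f2 (Fin.snoc w' b))
        ≤ ∑ w : Fin k → A, ∑ w' : Fin k → A, cantor w w' * σ w w' := by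
      have hreorg : ∀ w : Fin k → A, ∑ a, ∑ w' : Fin k → A, ∑ b, cantor w w'
            * ((σ w w' - if w = w' then D w else 0) * f1 (Fin.snoc w a) * f2 (Fin.snoc w' b))
          = ∑ w' : Fin k → A, cantor w w' * ((σ w w' - if w = w' then D w else 0)
              * (∑ a, f1 (Fin.snoc w a)) * (∑ b, f2 (Fin.snoc w' b))) := by
        intro w
        rw [Finset.sum_comm]
        refine Finset.sum_congr rfl fun w' _ => ?_
        have hsb : ∀ a : A, ∑ b, cantor w w'
              * ((σ w w' - if w = w' then D w else 0) * f1 (Fin.snoc w a) * f2 (Fin.snoc w' b))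
            = (cantor w w' * ((σ w w' - if w = w' then D w else 0) * f1 (Fin.snoc w a)))
              * (∑ b, f2 (Fin.snoc w' b)) := by
          intro a
          rw [Finset.mul_sum]
          refine Finset.sum_congr rfl fun b _ => ?_
          ring
        rw [Finset.sum_congr rfl fun a _ => hsb a, ← Finset.sum_mul, ← Finset.mul_sum,
          ← Finset.mul_sum]
        ring
      rw [Finset.sum_congr rfl fun w _ => hreorg w]
      apply Finset.sum_le_sum
      intro w _
      apply Finset.sum_le_sum
      intro w' _
      have hx0 : 0 ≤ σ w w' - (if w = w' then D w else 0) := hblock w w'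
      have hxle : σ w w' - (if w = w' then D w else 0) ≤ σ w w' := hblockle w w'
      have hi1 : 0 ≤ ∑ a, f1 (Fin.snoc w a) := Finset.sum_nonneg fun a _ => hf1nn _
      have hi2 : 0 ≤ ∑ b, f2 (Fin.snoc w' b) := Finset.sum_nonneg fun b _ => hf2nn _
      have h1 : (σ w w' - (if w = w' then D w else 0)) * (∑ a, f1 (Fin.snoc w a))
          ≤ σ w w' - (if w = w' then D w else 0) :=
        mul_le_of_le_one_right hx0 (hsumf1le w)
      have h2 : (σ w w' - (if w = w' then D w else 0)) * (∑ a, f1 (Fin.snoc w a))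
            * (∑ b, f2 (Fin.snoc w' b))
          ≤ (σ w w' - (if w = w' then D w else 0)) * (∑ a, f1 (Fin.snoc w a)) :=
        mul_le_of_le_one_right (mul_nonneg hx0 hi1) (hsumf2le w')
      exact mul_le_mul_of_nonneg_left (by linarith) (cantor_nonneg w w')
    -- bound part 2
    have hpart2 : ∑ w : Fin k → A, ∑ a, ∑ w' : Fin k → A, ∑ b,
          (if w = w' ∧ a ≠ b then (2:ℝ) ^ (-(k:ℤ)) else 0)
          * ((σ w w' - if w = w' then D w else 0) * f1 (Fin.snoc w a) * f2 (Fin.snoc w' b))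
        ≤ (2:ℝ) ^ (-(k:ℤ)) * ∑ w : Fin k → A, (m w - ∑ a, μ (Fin.snoc w a)) := by
      have hsingle : ∀ (w : Fin k → A) (a : A), ∑ w' : Fin k → A, ∑ b,
            (if w = w' ∧ a ≠ b then (2:ℝ) ^ (-(k:ℤ)) else 0)
            * ((σ w w' - if w = w' then D w else 0) * f1 (Fin.snoc w a) * f2 (Fin.snoc w' b))
          = ∑ b, (if a ≠ b then (2:ℝ) ^ (-(k:ℤ)) else 0)
            * ((σ w w - D w) * f1 (Fin.snoc w a) * f2 (Fin.snoc w b)) := by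
        intro w a
        rw [Finset.sum_eq_single w]
        · refine Finset.sum_congr rfl fun b _ => ?_
          simp
        · intro w' _ hne
          apply Finset.sum_eq_zero
          intro b _
          rw [if_neg (fun h => hne h.1.symm), zero_mul]
        · intro h
          exact absurd (Finset.mem_univ w) h
      rw [Finset.sum_congr rfl fun w _ => Finset.sum_congr rfl fun a _ => hsingle w a]
      have hwbound : ∀ w : Fin k → A, ∑ a, ∑ b, (if a ≠ b then (2:ℝ) ^ (-(k:ℤ)) else 0)
            * ((σ w w - D w) * f1 (Fin.snoc w a) * f2 (Fin.snoc w b))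
          ≤ (2:ℝ) ^ (-(k:ℤ)) * (m w - ∑ a, μ (Fin.snoc w a)) := by
        intro w
        have hσD : 0 ≤ σ w w - D w := by have := hDt w; linarith
        have step1 : ∑ a, ∑ b, (if a ≠ b then (2:ℝ) ^ (-(k:ℤ)) else 0)
              * ((σ w w - D w) * f1 (Fin.snoc w a) * f2 (Fin.snoc w b))
            ≤ ∑ a, ∑ b, (2:ℝ) ^ (-(k:ℤ))
              * ((σ w w - D w) * f1 (Fin.snoc w a) * f2 (Fin.snoc w b)) := by
          apply Finset.sum_le_sum
          intro a _
          apply Finset.sum_le_sum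
          intro b _
          have hX : 0 ≤ (σ w w - D w) * f1 (Fin.snoc w a) * f2 (Fin.snoc w b) :=
            mul_nonneg (mul_nonneg hσD (hf1nn _)) (hf2nn _)
          apply mul_le_mul_of_nonneg_right _ hX
          split
          · exact le_refl _
          · exact hcnn
        have step2 : ∑ a, ∑ b, (2:ℝ) ^ (-(k:ℤ))
              * ((σ w w - D w) * f1 (Fin.snoc w a) * f2 (Fin.snoc w b))
            = (2:ℝ) ^ (-(k:ℤ)) * ((σ w w - D w)
              * (∑ a, f1 (Fin.snoc w a)) * (∑ b, f2 (Fin.snoc w b))) := by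
          have hsb : ∀ a : A, ∑ b, (2:ℝ) ^ (-(k:ℤ))
                * ((σ w w - D w) * f1 (Fin.snoc w a) * f2 (Fin.snoc w b))
              = ((2:ℝ) ^ (-(k:ℤ)) * ((σ w w - D w) * f1 (Fin.snoc w a)))
                * (∑ b, f2 (Fin.snoc w b)) := by
            intro a
            rw [Finset.mul_sum]
            refine Finset.sum_congr rfl fun b _ => ?_
            ring
          rw [Finset.sum_congr rfl fun a _ => hsb a, ← Finset.sum_mul, ← Finset.mul_sum,
            ← Finset.mul_sum]
          ring
        have step3 : (σ w w - D w)
              * (∑ a, f1 (Fin.snoc w a)) * (∑ b, f2 (Fin.snoc w b))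
            ≤ m w - ∑ a, μ (Fin.snoc w a) := by
          have hi1 : 0 ≤ ∑ a, f1 (Fin.snoc w a) := Finset.sum_nonneg fun a _ => hf1nn _
          have h1 : (σ w w - D w) * (∑ a, f1 (Fin.snoc w a)) ≤ σ w w - D w :=
            mul_le_of_le_one_right hσD (hsumf1le w)
          have h2 : (σ w w - D w) * (∑ a, f1 (Fin.snoc w a)) * (∑ b, f2 (Fin.snoc w b))
              ≤ (σ w w - D w) * (∑ a, f1 (Fin.snoc w a)) :=
            mul_le_of_le_one_right (mul_nonneg hσD hi1) (hsumf2le w)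
          have h3 := htDm w
          linarith
        calc ∑ a, ∑ b, (if a ≠ b then (2:ℝ) ^ (-(k:ℤ)) else 0)
              * ((σ w w - D w) * f1 (Fin.snoc w a) * f2 (Fin.snoc w b))
            ≤ (2:ℝ) ^ (-(k:ℤ)) * ((σ w w - D w)
              * (∑ a, f1 (Fin.snoc w a)) * (∑ b, f2 (Fin.snoc w b))) := by
              rw [← step2]; exact step1
          _ ≤ (2:ℝ) ^ (-(k:ℤ)) * (m w - ∑ a, μ (Fin.snoc w a)) :=
              mul_le_mul_of_nonneg_left step3 hcnn
      calc ∑ w : Fin k → A, ∑ a, ∑ b, (if a ≠ b then (2:ℝ) ^ (-(k:ℤ)) else 0)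
            * ((σ w w - D w) * f1 (Fin.snoc w a) * f2 (Fin.snoc w b))
          ≤ ∑ w : Fin k → A, (2:ℝ) ^ (-(k:ℤ)) * (m w - ∑ a, μ (Fin.snoc w a)) :=
            Finset.sum_le_sum fun w _ => hwbound w
        _ = (2:ℝ) ^ (-(k:ℤ)) * ∑ w : Fin k → A, (m w - ∑ a, μ (Fin.snoc w a)) := by
            rw [Finset.mul_sum]
    linarith
  exact ⟨π, ⟨hπnn, hπrow, hπcol⟩, hcost⟩

end CKR

namespace CKR
set_option linter.unusedSectionVars false
set_option maxHeartbeats 1000000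

variable {A : Type*} [Fintype A] [DecidableEq A] {k : ℕ}

lemma marg_probDist {p : (Fin (k+1) → A) → ℝ} (hp : IsProbDist p) :
    IsProbDist (fun w : Fin k → A => ∑ a, p (Fin.snoc w a)) := by
  constructor
  · exact fun w => Finset.sum_nonneg fun a _ => hp.1 _
  · rw [← sum_snoc p]
    exact hp.2

lemma upper_bound {p1 p2 : (Fin (k+1) → A) → ℝ} (hp1 : IsProbDist p1) (hp2 : IsProbDist p2) :
    kant cantor p1 p2
      ≤ kant cantor (fun w : Fin k → A => ∑ a, p1 (Fin.snoc w a))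
          (fun w : Fin k → A => ∑ a, p2 (Fin.snoc w a))
        + (2:ℝ) ^ (-(k:ℤ)) * ∑ w : Fin k → A,
            (min (∑ a, p1 (Fin.snoc w a)) (∑ a, p2 (Fin.snoc w a))
              - ∑ a, min (p1 (Fin.snoc w a)) (p2 (Fin.snoc w a))) := by
  have key : kant cantor p1 p2
      - (2:ℝ) ^ (-(k:ℤ)) * ∑ w : Fin k → A,
          (min (∑ a, p1 (Fin.snoc w a)) (∑ a, p2 (Fin.snoc w a))
            - ∑ a, min (p1 (Fin.snoc w a)) (p2 (Fin.snoc w a)))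
      ≤ kant cantor (fun w : Fin k → A => ∑ a, p1 (Fin.snoc w a))
          (fun w : Fin k → A => ∑ a, p2 (Fin.snoc w a)) := by
    apply le_kant ⟨_, prod_isCoupling (marg_probDist hp1) (marg_probDist hp2)⟩
    intro σ hσ
    obtain ⟨π, hπc, hπcost⟩ := lift hp1 hp2 hσ
    have h1 : kant cantor p1 p2 ≤ ∑ u, ∑ v, cantor u v * π u v :=
      kant_le (fun x y => cantor_nonneg x y) hπc
    linarith
  linarith

end CKR

/-- Recursion for the Kantorovich cost with Cantor ground distance between distributions on
`A^{k+1}` and their marginals on `A^k`. -/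
theorem cantor_kantorovich_recursion {A : Type*} [Fintype A] [DecidableEq A] {k : ℕ}
    (hk : 1 ≤ k)
    (p1 p2 : (Fin (k + 1) → A) → ℝ) (hp1 : IsProbDist p1) (hp2 : IsProbDist p2) :
    kant cantor p1 p2
      = kant cantor (fun w : Fin k → A => ∑ a : A, p1 (Fin.snoc w a))
          (fun w : Fin k → A => ∑ a : A, p2 (Fin.snoc w a))
        + (2 : ℝ) ^ (-(k : ℤ)) *
          ∑ w : Fin k → A,
            (min (∑ a : A, p1 (Fin.snoc w a)) (∑ a : A, p2 (Fin.snoc w a))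
              - ∑ a : A, min (p1 (Fin.snoc w a)) (p2 (Fin.snoc w a))) := by
  have h1 := CKR.upper_bound hp1 hp2
  have h2 := CKR.lower_bound hp1 hp2
  linarith
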